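/- Suppose u₀, u₁ ∈ ℂ² are not both zero, α > 0, λ ∈ ℝ, and the function Φ(x) := (u₀ + u₁ x) e^{-α x²/2} is a pointwise eigenfunction of H_{A,B} with eigenvalue λ. Then AB = BA (equivalently, b = 1 or ξ = 0). -/

import Mathlib

/-- The matrix `A = [[a, ξ], [conj ξ, c]]`. -/
noncomputable def Amat (a c : ℝ) (ξ : ℂ) : Matrix (Fin 2) (Fin 2) ℂ :=
  !![(a : ℂ), ξ; (starRingEnd ℂ) ξ, (c : ℂ)]

/-- The matrix `B = [[1, 0], [0, b]]`. -/
noncomputable def Bmat (b : ℝ) : Matrix (Fin 2) (Fin 2) ℂ :=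
  !![1, 0; 0, (b : ℂ)]

/-- `Φ : ℝ → ℂ²` is a pointwise eigenfunction of `H_{A,B} = B(-∂ₓ²) + A x²` with
eigenvalue `l`: it is twice differentiable, not identically zero, and satisfies
`-B Φ'' + x² A Φ = l Φ` everywhere. -/
def IsPtEigenfun (A B : Matrix (Fin 2) (Fin 2) ℂ) (Φ : ℝ → Fin 2 → ℂ) (l : ℝ) : Prop :=
  Φ ≠ 0 ∧ Differentiable ℝ Φ ∧ Differentiable ℝ (deriv Φ) ∧
    ∀ x : ℝ, -(B.mulVec (deriv (deriv Φ) x)) + ((x : ℂ) ^ 2) • A.mulVec (Φ x) = (l : ℂ) • Φ x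

section aux
variable (α : ℝ) (u₀ u₁ : Fin 2 → ℂ)

noncomputable def Efun (α : ℝ) (x : ℝ) : ℂ := ((Real.exp (-α * x ^ 2 / 2) : ℝ) : ℂ)

noncomputable def qfun (u₀ u₁ : Fin 2 → ℂ) (x : ℝ) : Fin 2 → ℂ := u₀ + (x : ℂ) • u₁

lemma hasDerivAt_Efun (x : ℝ) :
    HasDerivAt (Efun α) (((-α * x : ℝ) : ℂ) * Efun α x) x := by
  have h1 : HasDerivAt (fun x : ℝ => -α * x ^ 2 / 2) (-α * x) x := by
    have := ((hasDerivAt_pow 2 x).const_mul (-α)).div_const 2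
    refine this.congr_deriv ?_
    simp only [Nat.cast_ofNat, show (2:ℕ) - 1 = 1 from rfl, pow_one]; ring
  have h2 := (Real.hasDerivAt_exp (-α * x ^ 2 / 2)).comp x h1
  have h3 := h2.ofReal_comp
  refine h3.congr_deriv ?_
  unfold Efun
  push_cast
  ring

lemma hasDerivAt_qfun (x : ℝ) : HasDerivAt (qfun u₀ u₁) u₁ x := by
  have h1 : HasDerivAt (fun x : ℝ => (x : ℂ)) 1 x := by
    exact ((hasDerivAt_id x).ofReal_comp).congr_deriv Complex.ofReal_one
  have h2 := h1.smul_const u₁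
  have h3 := (hasDerivAt_const x u₀).add h2
  exact h3.congr_deriv (by simp)

lemma hasDerivAt_Phi (x : ℝ) :
    HasDerivAt (fun x => Efun α x • qfun u₀ u₁ x)
      (Efun α x • u₁ + (((-α * x : ℝ) : ℂ) * Efun α x) • qfun u₀ u₁ x) x :=
  (hasDerivAt_Efun α x).smul (hasDerivAt_qfun u₀ u₁ x)


lemma hasDerivAt_Phi1 (x : ℝ) :
    HasDerivAt (fun x => Efun α x • u₁ + (((-α * x : ℝ) : ℂ) * Efun α x) • qfun u₀ u₁ x)
      (Efun α x • ((((α : ℂ) ^ 2 * (x : ℂ) ^ 2 - (α : ℂ))) • qfun u₀ u₁ x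
        + ((-2 * α * x : ℂ)) • u₁)) x := by
  have h1 : HasDerivAt (fun x : ℝ => -α * x) (-α) x := by
    simpa using (hasDerivAt_id x).const_mul (-α)
  have hD := (h1.ofReal_comp).mul (hasDerivAt_Efun α x)
  have h2 := ((hasDerivAt_Efun α x).smul_const u₁).add (hD.smul (hasDerivAt_qfun u₀ u₁ x))
  refine h2.congr_deriv ?_
  simp only [Pi.mul_apply]
  push_cast
  module

end aux


lemma eig_lemma (a c b : ℝ) (ξ : ℂ) (u : Fin 2 → ℂ) (hu : u ≠ 0) (μ ν : ℂ)
    (hB : (Bmat b).mulVec u = μ • u) (hA : (Amat a c ξ).mulVec u = ν • u) :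
    b = 1 ∨ ξ = 0 := by
  by_cases hb1 : b = 1
  · exact Or.inl hb1
  right
  have h0 := congrFun hB 0; have h1 := congrFun hB 1
  have g0 := congrFun hA 0; have g1 := congrFun hA 1
  simp [Bmat, Amat, Matrix.mulVec, dotProduct, Fin.sum_univ_two, Matrix.vecHead, Matrix.vecTail] at h0 h1 g0 g1
  have hbC : (b : ℂ) ≠ 1 := by
    intro h
    exact hb1 (by exact_mod_cast h)
  by_cases hz : u 0 = 0
  · have hu1 : u 1 ≠ 0 := by
      intro h
      apply hu
      funext i
      fin_cases i <;> simp [hz, h]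
    -- g0 : a * u 0 + ξ * u 1 = ν * u 0
    rw [hz] at g0
    simp only [mul_zero, zero_add] at g0
    exact (mul_eq_zero.mp g0).resolve_right hu1
  · have hμ : μ = 1 := by
      have : (μ - 1) * u 0 = 0 := by linear_combination -h0
      rcases mul_eq_zero.mp this with h | h
      · exact sub_eq_zero.mp h
      · exact absurd h hz
    have hu1 : u 1 = 0 := by
      rw [hμ] at h1
      rcases h1 with h | h
      · exact absurd h hbC
      · exact h
    -- g1 : conj ξ * u 0 + c * u 1 = ν * u 1
    rw [hu1] at g1
    simp only [mul_zero, add_zero] at g1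
    have : (starRingEnd ℂ) ξ = 0 := (mul_eq_zero.mp g1).resolve_right hz
    simpa using congrArg (starRingEnd ℂ) this


/-- STATEMENT 6: if `Φ(x) = (u₀ + u₁ x) e^{-αx²/2}` with `u₀, u₁` not both zero is a
pointwise eigenfunction of `H_{A,B}`, then `AB = BA`, i.e. `b = 1` or `ξ = 0`. -/
theorem eigenfunction_deg_one_implies_commute
    (a c b : ℝ) (ξ : ℂ) (ha : 0 < a) (hc : 0 < c) (hb : 1 ≤ b)
    (hξ : ‖ξ‖ ^ 2 < a * c)
    (u₀ u₁ : Fin 2 → ℂ) (hu : u₀ ≠ 0 ∨ u₁ ≠ 0) (α : ℝ) (hα : 0 < α) (l : ℝ)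
    (heig : IsPtEigenfun (Amat a c ξ) (Bmat b)
      (fun x => (Real.exp (-α * x ^ 2 / 2) : ℂ) • (u₀ + (x : ℂ) • u₁)) l) :
    Amat a c ξ * Bmat b = Bmat b * Amat a c ξ ∧ (b = 1 ∨ ξ = 0) := by
  obtain ⟨-, -, -, hode⟩ := heig
  have hd1 : deriv (fun x : ℝ => ((Real.exp (-α * x ^ 2 / 2) : ℝ) : ℂ) • (u₀ + (x : ℂ) • u₁))
      = fun x => Efun α x • u₁ + (((-α * x : ℝ) : ℂ) * Efun α x) • qfun u₀ u₁ x :=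
    funext fun x => (hasDerivAt_Phi α u₀ u₁ x).deriv
  have hd2 : ∀ x : ℝ,
      deriv (deriv (fun x : ℝ => ((Real.exp (-α * x ^ 2 / 2) : ℝ) : ℂ) • (u₀ + (x : ℂ) • u₁))) x
      = Efun α x • ((((α : ℂ) ^ 2 * (x : ℂ) ^ 2 - (α : ℂ))) • qfun u₀ u₁ x
          + ((-2 * α * x : ℂ)) • u₁) := by
    intro x
    rw [hd1]
    exact (hasDerivAt_Phi1 α u₀ u₁ x).deriv
  have key : ∀ x : ℝ,
      ((α : ℂ) • (Bmat b).mulVec u₀ - (l : ℂ) • u₀)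
      + (x : ℂ) • ((3 * α : ℂ) • (Bmat b).mulVec u₁ - (l : ℂ) • u₁)
      + (x : ℂ) ^ 2 • ((Amat a c ξ).mulVec u₀ - (α : ℂ) ^ 2 • (Bmat b).mulVec u₀)
      + (x : ℂ) ^ 3 • ((Amat a c ξ).mulVec u₁ - (α : ℂ) ^ 2 • (Bmat b).mulVec u₁) = 0 := by
    intro x
    have hE : Efun α x ≠ 0 := Complex.ofReal_ne_zero.mpr (Real.exp_ne_zero _)
    have h := hode x
    simp only [] at h
    rw [hd2 x] at h
    have hEE : ((Real.exp (-α * x ^ 2 / 2) : ℝ) : ℂ) = Efun α x := rfl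
    have hqq : (u₀ + (x : ℂ) • u₁) = qfun u₀ u₁ x := rfl
    rw [hEE, hqq] at h
    simp only [qfun, Matrix.mulVec_smul, Matrix.mulVec_add] at h
    apply smul_right_injective (Fin 2 → ℂ) hE
    show Efun α x • _ = Efun α x • _
    linear_combination (norm := module) h
  have hq4 : ∀ i : Fin 2, ∀ x : ℝ,
      ((α : ℂ) * (Bmat b).mulVec u₀ i - (l : ℂ) * u₀ i)
      + (x : ℂ) * ((3 * α : ℂ) * (Bmat b).mulVec u₁ i - (l : ℂ) * u₁ i)
      + (x : ℂ) ^ 2 * ((Amat a c ξ).mulVec u₀ i - (α : ℂ) ^ 2 * (Bmat b).mulVec u₀ i)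
      + (x : ℂ) ^ 3 * ((Amat a c ξ).mulVec u₁ i - (α : ℂ) ^ 2 * (Bmat b).mulVec u₁ i) = 0 := by
    intro i x
    have h := congrFun (key x) i
    simpa only [Pi.add_apply, Pi.smul_apply, Pi.sub_apply, Pi.zero_apply, smul_eq_mul] using h
  have hv0 : (α : ℂ) • (Bmat b).mulVec u₀ = (l : ℂ) • u₀ := by
    funext i
    have p0 := hq4 i 0
    push_cast at p0
    simp only [Pi.smul_apply, smul_eq_mul]
    linear_combination p0
  have hv1 : (3 * α : ℂ) • (Bmat b).mulVec u₁ = (l : ℂ) • u₁ := by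
    funext i
    have p0 := hq4 i 0; have p1 := hq4 i 1; have pm := hq4 i (-1); have p2 := hq4 i 2
    push_cast at p0 p1 pm p2
    simp only [Pi.smul_apply, smul_eq_mul]
    linear_combination (-1/2 : ℂ) * p0 + p1 - (1/3 : ℂ) * pm - (1/6 : ℂ) * p2
  have hv2 : (Amat a c ξ).mulVec u₀ = (α : ℂ) ^ 2 • (Bmat b).mulVec u₀ := by
    funext i
    have p0 := hq4 i 0; have p1 := hq4 i 1; have pm := hq4 i (-1)
    push_cast at p0 p1 pm
    simp only [Pi.smul_apply, smul_eq_mul]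
    linear_combination (-1 : ℂ) * p0 + (1/2 : ℂ) * p1 + (1/2 : ℂ) * pm
  have hv3 : (Amat a c ξ).mulVec u₁ = (α : ℂ) ^ 2 • (Bmat b).mulVec u₁ := by
    funext i
    have p0 := hq4 i 0; have p1 := hq4 i 1; have pm := hq4 i (-1); have p2 := hq4 i 2
    push_cast at p0 p1 pm p2
    simp only [Pi.smul_apply, smul_eq_mul]
    linear_combination (1/2 : ℂ) * p0 - (1/2 : ℂ) * p1 - (1/6 : ℂ) * pm + (1/6 : ℂ) * p2
  have hαne : (α : ℂ) ≠ 0 := by exact_mod_cast ne_of_gt hα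
  have hbξ : b = 1 ∨ ξ = 0 := by
    rcases hu with h | h
    · have hBu : (Bmat b).mulVec u₀ = ((l : ℂ) / α) • u₀ := by
        calc (Bmat b).mulVec u₀ = (α : ℂ)⁻¹ • ((α : ℂ) • (Bmat b).mulVec u₀) := by
              rw [smul_smul, inv_mul_cancel₀ hαne, one_smul]
        _ = ((l : ℂ) / α) • u₀ := by rw [hv0, smul_smul]; congr 1; field_simp
      have hAu : (Amat a c ξ).mulVec u₀ = ((α : ℂ) ^ 2 * ((l : ℂ) / α)) • u₀ := by
        rw [hv2, hBu, smul_smul]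
      exact eig_lemma a c b ξ u₀ h _ _ hBu hAu
    · have h3αne : (3 * α : ℂ) ≠ 0 := by
        simp [hαne]
      have hBu : (Bmat b).mulVec u₁ = ((l : ℂ) / (3 * α)) • u₁ := by
        calc (Bmat b).mulVec u₁ = (3 * α : ℂ)⁻¹ • ((3 * α : ℂ) • (Bmat b).mulVec u₁) := by
              rw [smul_smul, inv_mul_cancel₀ h3αne, one_smul]
        _ = ((l : ℂ) / (3 * α)) • u₁ := by rw [hv1, smul_smul]; congr 1; field_simp
      have hAu : (Amat a c ξ).mulVec u₁ = ((α : ℂ) ^ 2 * ((l : ℂ) / (3 * α))) • u₁ := by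
        rw [hv3, hBu, smul_smul]
      exact eig_lemma a c b ξ u₁ h _ _ hBu hAu
  refine ⟨?_, hbξ⟩
  ext i j
  fin_cases i <;> fin_cases j <;> rcases hbξ with h | h <;>
    simp [h, Amat, Bmat, Matrix.mul_apply, Fin.sum_univ_two, mul_comm]
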